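/- Let E be a finite-dimensional complex inner product space and let P, Q : E → E be two orthogonal projections (self-adjoint idempotent linear maps). Then E decomposes as an internal orthogonal direct sum of finitely many subspaces, each of dimension at most 2, each of which is invariant under both P and Q. -/

import Mathlib

open Module Submodule

private lemma span_invariant {E : Type*} [NormedAddCommGroup E] [InnerProductSpace ℂ E]
    (f : E →ₗ[ℂ] E) (s : Set E) (h : ∀ x ∈ s, f x ∈ span ℂ s) :
    ∀ x ∈ span ℂ s, f x ∈ span ℂ s := by
  intro x hx
  have : (span ℂ s).map f ≤ span ℂ s := (Submodule.map_span_le f s _).mpr h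
  exact this ⟨x, hx, rfl⟩

private lemma finrank_span_singleton_le {E : Type*} [NormedAddCommGroup E]
    [InnerProductSpace ℂ E] (x : E) : finrank ℂ (ℂ ∙ x) ≤ 1 := by
  by_cases h : x = 0
  · rw [h, Submodule.span_zero_singleton]
    simp
  · exact (finrank_span_singleton h).le

/-- There is a nonzero invariant subspace of dimension at most 2 inside any nonzero
invariant subspace. -/
private lemma exists_small_invariant {E : Type*} [NormedAddCommGroup E]
    [InnerProductSpace ℂ E] [FiniteDimensional ℂ E]
    (P Q : E →ₗ[ℂ] E) (hP2 : P ∘ₗ P = P) (hQ2 : Q ∘ₗ Q = Q)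
    (V : Submodule ℂ E) (hV : V ≠ ⊥)
    (hPV : ∀ x ∈ V, P x ∈ V) (hQV : ∀ x ∈ V, Q x ∈ V) :
    ∃ W : Submodule ℂ E, W ≠ ⊥ ∧ W ≤ V ∧ finrank ℂ W ≤ 2 ∧
      (∀ x ∈ W, P x ∈ W) ∧ (∀ x ∈ W, Q x ∈ W) := by
  have hPP : ∀ x : E, P (P x) = P x := fun x => by
    have := LinearMap.congr_fun hP2 x; simpa using this
  have hQQ : ∀ x : E, Q (Q x) = Q x := fun x => by
    have := LinearMap.congr_fun hQ2 x; simpa using this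
  by_cases h : ∀ x ∈ V, Q x = 0
  · -- Q vanishes on V: take an eigenvector of P restricted to V
    haveI : Nontrivial V := Submodule.nontrivial_iff_ne_bot.mpr hV
    obtain ⟨μ, hμ⟩ := Module.End.exists_eigenvalue (P.restrict hPV)
    obtain ⟨v, hv⟩ := hμ.exists_hasEigenvector
    have hv0 : (v : E) ≠ 0 := fun hz => hv.right (Subtype.ext hz)
    have hPv : P (v : E) = μ • (v : E) := by
      have := congrArg (Subtype.val) hv.apply_eq_smul
      simpa using this
    refine ⟨span ℂ {(v : E)}, ?_, ?_, ?_, ?_, ?_⟩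
    · simpa [Submodule.span_singleton_eq_bot] using hv0
    · rw [span_le]; simpa using v.2
    · have := finrank_span_singleton (K := ℂ) hv0
      omega
    · apply span_invariant
      intro x hx
      rcases hx with rfl
      rw [hPv]
      exact smul_mem _ _ (subset_span rfl)
    · intro x hx
      have hxV : x ∈ V := by
        have : span ℂ {(v : E)} ≤ V := by rw [span_le]; simpa using v.2
        exact this hx
      rw [h x hxV]; exact zero_mem _
  · -- Q does not vanish on V: take eigenvector of Q ∘ P on U = Q(V)
    push_neg at h
    obtain ⟨v, hvV, hvQ⟩ := h
    set U : Submodule ℂ E := V.map Q with hU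
    have hUV : U ≤ V := by
      rintro _ ⟨x, hx, rfl⟩
      exact hQV x hx
    have hQU : ∀ u ∈ U, Q u = u := by
      rintro _ ⟨x, hx, rfl⟩
      exact hQQ x
    haveI : Nontrivial U := by
      apply Submodule.nontrivial_iff_ne_bot.mpr
      intro hbot
      exact hvQ (by
        have : Q v ∈ U := ⟨v, hvV, rfl⟩
        simpa [hbot] using this)
    have hinv : ∀ x ∈ U, (Q ∘ₗ P) x ∈ U := by
      intro x hx
      exact ⟨P x, hPV x (hUV hx), rfl⟩
    obtain ⟨μ, hμ⟩ := Module.End.exists_eigenvalue ((Q ∘ₗ P).restrict hinv)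
    obtain ⟨u, hu⟩ := hμ.exists_hasEigenvector
    have hu0 : (u : E) ≠ 0 := fun hz => hu.right (Subtype.ext hz)
    have hQPu : Q (P (u : E)) = μ • (u : E) := by
      have := congrArg (Subtype.val) hu.apply_eq_smul
      simpa using this
    have hQu : Q (u : E) = (u : E) := hQU _ u.2
    have huV : (u : E) ∈ V := hUV u.2
    refine ⟨span ℂ {(u : E), P (u : E)}, ?_, ?_, ?_, ?_, ?_⟩
    · intro hbot
      exact hu0 (by
        have : (u : E) ∈ span ℂ {(u : E), P (u : E)} := subset_span (by simp)
        simpa [hbot] using this)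
    · rw [span_le]
      rintro x (rfl | rfl)
      · exact huV
      · exact hPV _ huV
    · have h1 : span ℂ ({(u : E), P (u : E)} : Set E) = (ℂ ∙ (u : E)) ⊔ (ℂ ∙ P (u : E)) := by
        rw [Submodule.span_insert]
      rw [h1]
      refine (Submodule.finrank_add_le_finrank_add_finrank _ _).trans ?_
      have h2 : finrank ℂ (ℂ ∙ (u : E)) ≤ 1 := finrank_span_singleton_le _
      have h3 : finrank ℂ (ℂ ∙ P (u : E)) ≤ 1 := finrank_span_singleton_le _
      omega
    · apply span_invariant
      rintro x (rfl | rfl)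
      · exact subset_span (by simp)
      · rw [hPP]; exact subset_span (by simp)
    · apply span_invariant
      rintro x (rfl | rfl)
      · rw [hQu]; exact subset_span (by simp)
      · rw [hQPu]; exact smul_mem _ _ (subset_span (by simp))

private lemma jordan_aux {E : Type*} [NormedAddCommGroup E]
    [InnerProductSpace ℂ E] [FiniteDimensional ℂ E]
    (P Q : E →ₗ[ℂ] E)
    (hP : LinearMap.IsSymmetric P) (hP2 : P ∘ₗ P = P)
    (hQ : LinearMap.IsSymmetric Q) (hQ2 : Q ∘ₗ Q = Q) :
    ∀ (k : ℕ) (V : Submodule ℂ E), finrank ℂ V ≤ k →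
      (∀ x ∈ V, P x ∈ V) → (∀ x ∈ V, Q x ∈ V) →
      ∃ (n : ℕ) (W : Fin n → Submodule ℂ E),
        (∀ i, W i ≤ V) ∧
        (∀ i j, i ≠ j → ∀ x ∈ W i, ∀ y ∈ W j, (inner ℂ x y : ℂ) = 0) ∧
        iSup W = V ∧
        (∀ i, finrank ℂ (W i) ≤ 2) ∧
        (∀ i, ∀ x ∈ W i, P x ∈ W i) ∧
        (∀ i, ∀ x ∈ W i, Q x ∈ W i) := by
  intro k
  induction k with
  | zero =>
    intro V hVr _ _
    have hV : V = ⊥ := by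
      have : finrank ℂ V = 0 := Nat.le_zero.mp hVr
      exact Submodule.finrank_eq_zero.mp this
    exact ⟨0, fun i => i.elim0, fun i => i.elim0, fun i => i.elim0,
      by simp [hV], fun i => i.elim0, fun i => i.elim0, fun i => i.elim0⟩
  | succ k ih =>
    intro V hVr hPV hQV
    by_cases hV : V = ⊥
    · exact ⟨0, fun i => i.elim0, fun i => i.elim0, fun i => i.elim0,
        by simp [hV], fun i => i.elim0, fun i => i.elim0, fun i => i.elim0⟩
    obtain ⟨W₀, hW₀ne, hW₀V, hW₀r, hW₀P, hW₀Q⟩ :=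
      exists_small_invariant P Q hP2 hQ2 V hV hPV hQV
    set V' : Submodule ℂ E := W₀ᗮ ⊓ V with hV'
    have hV'V : V' ≤ V := inf_le_right
    have hV'P : ∀ x ∈ V', P x ∈ V' := by
      rintro x ⟨hx1, hx2⟩
      refine ⟨?_, hPV x hx2⟩
      intro w hw
      rw [← hP _ _]
      exact hx1 _ (hW₀P w hw)
    have hV'Q : ∀ x ∈ V', Q x ∈ V' := by
      rintro x ⟨hx1, hx2⟩
      refine ⟨?_, hQV x hx2⟩
      intro w hw
      rw [← hQ _ _]
      exact hx1 _ (hW₀Q w hw)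
    have hlt : V' < V := by
      refine lt_of_le_of_ne hV'V ?_
      intro heq
      apply hW₀ne
      rw [← le_bot_iff, ← W₀.inf_orthogonal_eq_bot]
      exact le_inf le_rfl (hW₀V.trans (heq ▸ inf_le_left))
    have hV'r : finrank ℂ V' ≤ k := by
      have := Submodule.finrank_lt_finrank_of_lt hlt
      omega
    obtain ⟨n, W, hWV, hWorth, hWsup, hWr, hWP, hWQ⟩ := ih V' hV'r hV'P hV'Q
    have hWorthW₀ : ∀ i, W i ≤ W₀ᗮ := fun i => (hWV i).trans inf_le_left
    -- V = W₀ ⊔ V'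
    have hsup : W₀ ⊔ V' = V := by
      apply le_antisymm (sup_le hW₀V hV'V)
      intro x hx
      have hxd : x = (orthogonalProjection W₀ x : E) + (x - orthogonalProjection W₀ x) := by
        abel
      rw [hxd]
      refine add_mem_sup (SetLike.coe_mem _) ⟨W₀.sub_starProjection_mem_orthogonal x, ?_⟩
      exact sub_mem hx (hW₀V (SetLike.coe_mem _))
    refine ⟨n + 1, Fin.cons W₀ W, ?_, ?_, ?_, ?_, ?_, ?_⟩
    · intro i
      refine Fin.cases ?_ ?_ i
      · exact hW₀V
      · intro j; exact (hWV j).trans hV'V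
    · intro i j
      refine Fin.cases ?_ (fun i' => ?_) i <;> refine Fin.cases ?_ (fun j' => ?_) j
      · intro h; exact absurd rfl h
      · intro _ x hx y hy
        rw [Fin.cons_zero] at hx
        rw [Fin.cons_succ] at hy
        exact hWorthW₀ j' hy x hx
      · intro _ x hx y hy
        rw [Fin.cons_succ] at hx
        rw [Fin.cons_zero] at hy
        exact inner_eq_zero_symm.mpr (hWorthW₀ i' hx y hy)
      · intro h x hx y hy
        rw [Fin.cons_succ] at hx hy
        refine hWorth i' j' (fun e => h (by rw [e])) x hx y hy
    · rw [← hsup]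
      apply le_antisymm
      · apply iSup_le
        intro i
        refine Fin.cases ?_ ?_ i
        · exact le_sup_left
        · intro j
          exact le_trans (le_trans (le_iSup W j) (hWsup.le)) le_sup_right
      · apply sup_le
        · simpa using le_iSup (Fin.cons W₀ W) 0
        · rw [← hWsup]
          apply iSup_le
          intro j
          simpa using le_iSup (Fin.cons W₀ W) j.succ
    · intro i
      refine Fin.cases ?_ ?_ i
      · exact hW₀r
      · exact hWr
    · intro i
      refine Fin.cases ?_ ?_ i
      · exact hW₀P
      · exact hWP
    · intro i
      refine Fin.cases ?_ ?_ i
      · exact hW₀Q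
      · exact hWQ

/-- **Jordan's lemma on pairs of projections** (Jordan 1875): if `P` and `Q` are two
orthogonal projections (self-adjoint idempotents) on a finite-dimensional complex
inner product space `E`, then `E` decomposes as an internal orthogonal direct sum of
finitely many subspaces of dimension at most 2, each invariant under both `P` and `Q`. -/
theorem jordan_two_projections (E : Type*) [NormedAddCommGroup E]
    [InnerProductSpace ℂ E] [FiniteDimensional ℂ E]
    (P Q : E →ₗ[ℂ] E)
    (hP : LinearMap.IsSymmetric P) (hP2 : P ∘ₗ P = P)
    (hQ : LinearMap.IsSymmetric Q) (hQ2 : Q ∘ₗ Q = Q) :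
    ∃ (n : ℕ) (V : Fin n → Submodule ℂ E),
      DirectSum.IsInternal V ∧
      OrthogonalFamily ℂ (fun i => V i) (fun i => (V i).subtypeₗᵢ) ∧
      (∀ i, Module.finrank ℂ (V i) ≤ 2) ∧
      (∀ i, ∀ x ∈ V i, P x ∈ V i) ∧
      (∀ i, ∀ x ∈ V i, Q x ∈ V i) := by
  obtain ⟨n, W, _, horth, hsup, hr, hPW, hQW⟩ :=
    jordan_aux P Q hP hP2 hQ hQ2 (finrank ℂ (⊤ : Submodule ℂ E)) ⊤ le_rfl
      (fun x _ => trivial) (fun x _ => trivial)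
  have hOF : OrthogonalFamily ℂ (fun i => W i) (fun i => (W i).subtypeₗᵢ) := by
    intro i j hij v w
    exact horth i j hij v v.2 w w.2
  refine ⟨n, W, ?_, hOF, hr, hPW, hQW⟩
  exact DirectSum.isInternal_submodule_of_iSupIndep_of_iSup_eq_top hOF.independent hsup
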